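/- Let L be a finite-dimensional solvable Lie algebra and let M, K be maximal subalgebras with K_L ⊄ M_L and K ≠ K_L. Let A/K_L be a minimal ideal of L/K_L, where A is an ideal of L containing K_L. Then A ∩ K = K_L, A = (A ∩ M) + K_L, and (A ∩ M)/(K_L ∩ M) is isomorphic to A/K_L; moreover A ∩ M is an ideal of M and M = (A ∩ M) + (M ∩ K). -/

import Mathlib

/-- The core of a subalgebra: the largest ideal of `L` contained in it. -/
noncomputable def lieCore (F : Type*) [Field F] (L : Type*) [LieRing L] [LieAlgebra F L]
    (M : LieSubalgebra F L) : LieIdeal F L :=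
  sSup {I : LieIdeal F L | (I : Set L) ⊆ (M : Set L)}

theorem lieCore_subset {F : Type*} [Field F] {L : Type*} [LieRing L] [LieAlgebra F L]
    (S : LieSubalgebra F L) : ((lieCore F L S : LieIdeal F L) : Set L) ⊆ S := by
  intro x hx
  have h : (lieCore F L S).toSubmodule ≤ S.toSubmodule := by
    rw [lieCore, LieSubmodule.sSup_toSubmodule]
    refine sSup_le ?_
    rintro p ⟨I, hI, rfl⟩
    exact fun y hy => hI hy
  exact h hx

theorem le_lieCore {F : Type*} [Field F] {L : Type*} [LieRing L] [LieAlgebra F L]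
    {S : LieSubalgebra F L} {I : LieIdeal F L} (h : (I : Set L) ⊆ S) : I ≤ lieCore F L S :=
  le_sSup h

/-- If an ideal is not contained in a maximal subalgebra, then together they span. -/
theorem ideal_sup_coatom {F : Type*} [Field F] {L : Type*} [LieRing L] [LieAlgebra F L]
    (I : LieIdeal F L) (S : LieSubalgebra F L) (hS : IsCoatom S) (hns : ¬ (I : Set L) ⊆ S) :
    ∀ x : L, ∃ a ∈ I, ∃ k ∈ S, x = a + k := by
  set T : LieSubalgebra F L :=
    { I.toSubmodule ⊔ S.toSubmodule with
      lie_mem' := by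
        intro x y hx hy
        obtain ⟨a, ha, k, hk, rfl⟩ := Submodule.mem_sup.mp hx
        obtain ⟨a', ha', k', hk', rfl⟩ := Submodule.mem_sup.mp hy
        have key : ⁅a + k, a' + k'⁆ = (⁅a, a'⁆ + ⁅a, k'⁆ + ⁅k, a'⁆) + ⁅k, k'⁆ := by
          simp only [lie_add, add_lie]; abel
        rw [key]
        refine Submodule.add_mem _ (Submodule.mem_sup_left ?_) (Submodule.mem_sup_right (S.lie_mem hk hk'))
        refine Submodule.add_mem _ (Submodule.add_mem _ (I.lie_mem ha') ?_) (I.lie_mem ha')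
        rw [← lie_skew]
        exact I.toSubmodule.neg_mem (I.lie_mem ha) } with hT
  have hST : S < T := by
    rw [SetLike.lt_iff_le_and_exists]
    refine ⟨fun x hx => Submodule.mem_sup_right hx, ?_⟩
    have : ¬ (I : Set L) ⊆ S := hns
    rw [Set.not_subset] at this
    obtain ⟨a, ha, haS⟩ := this
    exact ⟨a, Submodule.mem_sup_left ha, haS⟩
  have hTop : T = ⊤ := hS.2 T hST
  intro x
  have hx : x ∈ T := hTop ▸ trivial
  obtain ⟨a, ha, k, hk, rfl⟩ := Submodule.mem_sup.mp hx
  exact ⟨a, ha, k, hk, rfl⟩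

/-- A minimal ideal over `B` in a solvable Lie algebra is abelian modulo `B`. -/
theorem bracket_le_of_minimal {F : Type*} [Field F] {L : Type*} [LieRing L] [LieAlgebra F L]
    [LieAlgebra.IsSolvable L] {B A : LieIdeal F L} (hBA : B < A)
    (hmin : ∀ I : LieIdeal F L, B ≤ I → I ≤ A → I = B ∨ I = A) :
    ⁅A, A⁆ ≤ B := by
  rcases hmin (⁅A, A⁆ ⊔ B) le_sup_right
      (sup_le (LieSubmodule.lie_le_left A A) hBA.le) with h | h
  · exact le_trans le_sup_left h.le
  · exfalso
    have key : ∀ n, LieAlgebra.derivedSeriesOfIdeal F L n A ⊔ B = A := by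
      intro n; induction n with
      | zero =>
        rw [LieAlgebra.derivedSeriesOfIdeal_zero]
        exact sup_eq_left.mpr hBA.le
      | succ n ih =>
        refine le_antisymm
          (sup_le (LieAlgebra.derivedSeriesOfIdeal_le_self A _) hBA.le) ?_
        have h1 : ⁅A, A⁆ ≤ LieAlgebra.derivedSeriesOfIdeal F L (n + 1) A ⊔ B := by
          conv_lhs => rw [← ih]
          rw [LieSubmodule.sup_lie, LieSubmodule.lie_sup, LieSubmodule.lie_sup]
          refine sup_le (sup_le ?_ ?_) (sup_le ?_ ?_)
          · rw [← LieAlgebra.derivedSeriesOfIdeal_succ]; exact le_sup_left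
          · exact le_trans (LieSubmodule.lie_le_right _ _) le_sup_right
          · exact le_trans (LieSubmodule.lie_le_left _ _) le_sup_right
          · exact le_trans (LieSubmodule.lie_le_left _ _) le_sup_right
        conv_lhs => rw [← h]
        exact sup_le h1 le_sup_right
    obtain ⟨k, hk⟩ := LieAlgebra.IsSolvable.solvable (R := F) (L := L)
    have hbot : LieAlgebra.derivedSeriesOfIdeal F L k A = ⊥ := by
      refine le_bot_iff.mp ?_
      rw [← hk, LieAlgebra.derivedSeries_def]
      exact LieAlgebra.derivedSeriesOfIdeal_mono le_top k
    have := key k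
    rw [hbot, bot_sup_eq] at this
    exact hBA.ne this

/-- Let `M`, `K` be maximal subalgebras of a finite-dimensional solvable Lie algebra `L`
with `K_L ⊄ M_L` and `K ≠ K_L`, and let `A/K_L` be a minimal ideal of `L/K_L`.  Then
`A ∩ K = K_L`, `A = (A ∩ M) + K_L`, `(A ∩ M)/(K_L ∩ M) ≅ A/K_L`; moreover `A ∩ M` is an
ideal of `M` and `M = (A ∩ M) + (M ∩ K)`. -/
theorem structure_of_nonconjugate_maximal_intersection (F : Type*) [Field F]
    (L : Type*) [LieRing L] [LieAlgebra F L] [FiniteDimensional F L]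
    [LieAlgebra.IsSolvable L]
    (M K : LieSubalgebra F L) (hM : IsCoatom M) (hK : IsCoatom K)
    (hcore : ¬ lieCore F L K ≤ lieCore F L M)
    (hKne : (K : Set L) ≠ ((lieCore F L K : LieIdeal F L) : Set L))
    (A : LieIdeal F L) (hKA : lieCore F L K < A)
    (hmin : ∀ I : LieIdeal F L, lieCore F L K ≤ I → I ≤ A → I = lieCore F L K ∨ I = A) :
    {z : L | z ∈ A ∧ z ∈ K} = ((lieCore F L K : LieIdeal F L) : Set L) ∧
    (∀ x ∈ A, ∃ y : L, (y ∈ A ∧ y ∈ M) ∧ ∃ z ∈ lieCore F L K, x = y + z) ∧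
    (∃ e : ((↥(A.toSubmodule ⊓ M.toSubmodule)) ⧸
              Submodule.comap (A.toSubmodule ⊓ M.toSubmodule).subtype
                ((lieCore F L K).toSubmodule ⊓ M.toSubmodule)) ≃ₗ[F]
           ((↥A.toSubmodule) ⧸
              Submodule.comap A.toSubmodule.subtype (lieCore F L K).toSubmodule), True) ∧
    (∀ m ∈ M, ∀ x : L, x ∈ A → x ∈ M → (⁅m, x⁆ ∈ A ∧ ⁅m, x⁆ ∈ M)) ∧
    (∀ m ∈ M, ∃ y : L, (y ∈ A ∧ y ∈ M) ∧ ∃ z : L, (z ∈ M ∧ z ∈ K) ∧ m = y + z) := by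
  classical
  set B : LieIdeal F L := lieCore F L K with hBdef
  have hBA : B ≤ A := hKA.le
  have hBK : (B : Set L) ⊆ K := lieCore_subset K
  have hAnK : ¬ (A : Set L) ⊆ K := by
    intro h
    exact absurd (lt_of_lt_of_le hKA (le_lieCore h)) (lt_irrefl B)
  have hBnM : ¬ (B : Set L) ⊆ M := fun h => hcore (le_lieCore h)
  have hLAK := ideal_sup_coatom A K hK hAnK
  have hLBM := ideal_sup_coatom B M hM hBnM
  have hab : ⁅A, A⁆ ≤ B := bracket_le_of_minimal hKA hmin
  -- Second conclusion: A = (A ∩ M) + B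
  have goal2 : ∀ x ∈ A, ∃ y : L, (y ∈ A ∧ y ∈ M) ∧ ∃ z ∈ B, x = y + z := by
    intro x hx
    obtain ⟨b, hb, m, hm, rfl⟩ := hLBM x
    have hmA : m ∈ A := by
      have h := A.toSubmodule.sub_mem hx (hBA hb)
      simpa using h
    exact ⟨m, ⟨hmA, hm⟩, b, hb, add_comm b m⟩
  -- First conclusion: A ∩ K = B
  have goal1 : {z : L | z ∈ A ∧ z ∈ K} = (B : Set L) := by
    apply Set.Subset.antisymm
    · intro z hz
      obtain ⟨hzA, hzK⟩ := hz
      set J : LieIdeal F L :=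
        { toSubmodule := A.toSubmodule ⊓ K.toSubmodule
          lie_mem := by
            intro x m hm
            obtain ⟨hmA, hmK⟩ := Submodule.mem_inf.mp hm
            obtain ⟨a, ha, k, hk, rfl⟩ := hLAK x
            have h1 : ⁅a, m⁆ ∈ B := hab (LieSubmodule.lie_mem_lie ha hmA)
            have h2 : ⁅k, m⁆ ∈ A := A.lie_mem hmA
            have h3 : ⁅k, m⁆ ∈ K := K.lie_mem hk hmK
            rw [add_lie]
            exact Submodule.mem_inf.mpr
              ⟨A.toSubmodule.add_mem (hBA h1) h2, K.toSubmodule.add_mem (hBK h1) h3⟩ } with hJ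
      have hJB : J ≤ B := le_lieCore (fun y hy => (Submodule.mem_inf.mp hy).2)
      exact hJB (Submodule.mem_inf.mpr ⟨hzA, hzK⟩)
    · intro z hz
      exact ⟨hBA hz, hBK hz⟩
  -- Third conclusion: second isomorphism theorem
  have hsup : (A.toSubmodule ⊓ M.toSubmodule) ⊔ B.toSubmodule = A.toSubmodule := by
    apply le_antisymm (sup_le inf_le_left (fun x hx => hBA hx))
    intro x hx
    obtain ⟨y, ⟨hyA, hyM⟩, z, hz, rfl⟩ := goal2 x hx
    exact Submodule.add_mem _ (Submodule.mem_sup_left (Submodule.mem_inf.mpr ⟨hyA, hyM⟩))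
      (Submodule.mem_sup_right hz)
  have hinf : (A.toSubmodule ⊓ M.toSubmodule) ⊓ B.toSubmodule
      = B.toSubmodule ⊓ M.toSubmodule := by
    ext x
    simp only [Submodule.mem_inf]
    constructor
    · rintro ⟨⟨-, hM⟩, hB⟩; exact ⟨hB, hM⟩
    · rintro ⟨hB, hM⟩; exact ⟨⟨hBA hB, hM⟩, hB⟩
  have e := LinearMap.quotientInfEquivSupQuotient (A.toSubmodule ⊓ M.toSubmodule) B.toSubmodule
  rw [← Submodule.comap_inf, hinf, hsup] at e
  -- Fifth conclusion
  have goal5 : ∀ m ∈ M, ∃ y : L, (y ∈ A ∧ y ∈ M) ∧ ∃ z : L, (z ∈ M ∧ z ∈ K) ∧ m = y + z := by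
    intro m hm
    obtain ⟨a, ha, k, hk, hmeq⟩ := hLAK m
    obtain ⟨y, ⟨hyA, hyM⟩, w, hw, haeq⟩ := goal2 a ha
    refine ⟨y, ⟨hyA, hyM⟩, w + k, ⟨?_, K.add_mem (hBK hw) hk⟩, ?_⟩
    · have hwk : w + k = m - y := by rw [hmeq, haeq]; abel
      rw [hwk]; exact M.sub_mem hm hyM
    · rw [hmeq, haeq]; abel
  exact ⟨goal1, goal2, ⟨e, trivial⟩,
    fun m hm x hxA hxM => ⟨A.lie_mem hxA, M.lie_mem hm hxM⟩, goal5⟩
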